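/- A₂ cancellation lemma (Lemma 5.9 of the paper): let γ₁ = (−1,0), γ₂ = (0,1), γ₃ = (1,1), γ₄ = (1,0), γ₅ = (0,−1). Then the composite 𝒦_{γ₅} ∘ 𝒦_{γ₄} ∘ 𝒦_{γ₃} ∘ 𝒦_{γ₂} ∘ 𝒦_{γ₁} of the five wall-crossing automorphisms of K = ℂ(x,y) sends x ↦ xy and y ↦ x^{−1}; equivalently it sends z^μ ↦ z^{M^{−1}μ} for every μ ∈ ℤ², where M : ℤ² → ℤ² is the linear map with M(1,0) = (0,−1) and M(0,1) = (1,1). That is, the composition of the five wall-crossing transformations cancels the monodromy M of the type II singular fibre. -/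

import Mathlib

open MvPolynomial

set_option synthInstance.maxHeartbeats 1000000
set_option maxHeartbeats 1000000

noncomputable section

/-- `K = ℂ(x,y)`, the field of rational functions in two variables over `ℂ`. -/
abbrev K : Type := FractionRing (MvPolynomial (Fin 2) ℂ)

/-- The rational function `x`. -/
noncomputable def xx : K := algebraMap (MvPolynomial (Fin 2) ℂ) K (X 0)

/-- The rational function `y`. -/
noncomputable def yy : K := algebraMap (MvPolynomial (Fin 2) ℂ) K (X 1)

/-- `z^μ = x^m y^n` for `μ = (m,n) ∈ ℤ²`. -/
noncomputable def zmon (μ : ℤ × ℤ) : K := xx ^ μ.1 * yy ^ μ.2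

/-- `⟨μ,γ⟩ = m b − n a` for `μ = (m,n)`, `γ = (a,b)`. -/
def pairing (μ γ : ℤ × ℤ) : ℤ := μ.1 * γ.2 - μ.2 * γ.1

/-- `Φ` is the wall-crossing transformation `𝒦_{γ,d}`: the `ℂ`-algebra automorphism of `K`
satisfying `𝒦_{γ,d}(z^μ) = z^μ (1+z^γ)^{d⟨μ,γ⟩}` for all `μ ∈ ℤ²`. -/
def IsWallCrossing (d : ℤ) (γ : ℤ × ℤ) (Φ : K ≃ₐ[ℂ] K) : Prop :=
  ∀ μ : ℤ × ℤ, Φ (zmon μ) = zmon μ * (1 + zmon γ) ^ (d * pairing μ γ)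

lemma hinj : Function.Injective (algebraMap (MvPolynomial (Fin 2) ℂ) K) :=
  IsFractionRing.injective _ _

lemma hpoly (p : MvPolynomial (Fin 2) ℂ) (hp : eval (fun _ => (0:ℂ)) p ≠ 0) :
    algebraMap (MvPolynomial (Fin 2) ℂ) K p ≠ 0 := fun h => hp (by
  rw [show p = 0 from hinj (by simpa using h)]; simp)

lemma xx_ne : xx ≠ 0 := fun h => X_ne_zero (R := ℂ) 0 (hinj (by simpa [xx] using h))
lemma yy_ne : yy ≠ 0 := fun h => X_ne_zero (R := ℂ) 1 (hinj (by simpa [yy] using h))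

lemma h1x_ne : (1:K) + xx ≠ 0 := by
  have : (1:K) + xx = algebraMap (MvPolynomial (Fin 2) ℂ) K (1 + X 0) := by
    rw [map_add, map_one]; rfl
  rw [this]; exact hpoly _ (by simp)

lemma h1y_ne : (1:K) + yy ≠ 0 := by
  have : (1:K) + yy = algebraMap (MvPolynomial (Fin 2) ℂ) K (1 + X 1) := by
    rw [map_add, map_one]; rfl
  rw [this]; exact hpoly _ (by simp)

lemma h1xy_ne : (1:K) + xx * yy ≠ 0 := by
  have : (1:K) + xx * yy = algebraMap (MvPolynomial (Fin 2) ℂ) K (1 + X 0 * X 1) := by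
    rw [map_add, map_one, map_mul]; rfl
  rw [this]; exact hpoly _ (by simp)

lemma hq_ne : (1:K) + xx * yy + yy ≠ 0 := by
  have : (1:K) + xx * yy + yy
      = algebraMap (MvPolynomial (Fin 2) ℂ) K (1 + X 0 * X 1 + X 1) := by
    rw [map_add, map_add, map_one, map_mul]; rfl
  rw [this]; exact hpoly _ (by simp)

/-- `1 + y⁻¹` rewritten with a single inverse. -/
lemma one_add_yy_inv : (1:K) + yy⁻¹ = (1 + yy) * yy⁻¹ := by
  rw [add_mul, one_mul, mul_inv_cancel₀ yy_ne]; exact add_comm _ _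

/-- A₂ cancellation lemma: with `γ₁ = (−1,0)`, `γ₂ = (0,1)`, `γ₃ = (1,1)`, `γ₄ = (1,0)`,
`γ₅ = (0,−1)`, the composite `𝒦_{γ₅} ∘ 𝒦_{γ₄} ∘ 𝒦_{γ₃} ∘ 𝒦_{γ₂} ∘ 𝒦_{γ₁}` sends
`z^μ ↦ z^{M⁻¹μ}` for every `μ ∈ ℤ²`, where `M(1,0) = (0,−1)`, `M(0,1) = (1,1)`,
so `M⁻¹(m,n) = (m−n, m)`; in particular `x ↦ xy` and `y ↦ x⁻¹`. -/
theorem A2_cancellation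
    (K1 K2 K3 K4 K5 : K ≃ₐ[ℂ] K)
    (h1 : IsWallCrossing 1 (-1, 0) K1) (h2 : IsWallCrossing 1 (0, 1) K2)
    (h3 : IsWallCrossing 1 (1, 1) K3) (h4 : IsWallCrossing 1 (1, 0) K4)
    (h5 : IsWallCrossing 1 (0, -1) K5) :
    ∀ μ : ℤ × ℤ, K5 (K4 (K3 (K2 (K1 (zmon μ))))) = zmon (μ.1 - μ.2, μ.1) := by
  -- nonvanishing facts, placed in the local context so that `field_simp` can use them
  have Hx : xx ≠ 0 := xx_ne
  have Hy : yy ≠ 0 := yy_ne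
  have H1x : (1:K) + xx ≠ 0 := h1x_ne
  have H1y : (1:K) + yy ≠ 0 := h1y_ne
  have H1xy : (1:K) + xx * yy ≠ 0 := h1xy_ne
  have Hq : (1:K) + xx * yy + yy ≠ 0 := hq_ne
  -- values of the five automorphisms on x and y
  have k1x : K1 xx = xx := by simpa [zmon, pairing] using h1 (1, 0)
  have k1y : K1 yy = yy * (1 + xx⁻¹) := by simpa [zmon, pairing] using h1 (0, 1)
  have k2x : K2 xx = xx * (1 + yy) := by simpa [zmon, pairing] using h2 (1, 0)
  have k2y : K2 yy = yy := by simpa [zmon, pairing] using h2 (0, 1)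
  have k3x : K3 xx = xx * (1 + xx * yy) := by simpa [zmon, pairing] using h3 (1, 0)
  have k3y : K3 yy = yy * (1 + xx * yy)⁻¹ := by simpa [zmon, pairing] using h3 (0, 1)
  have k4x : K4 xx = xx := by simpa [zmon, pairing] using h4 (1, 0)
  have k4y : K4 yy = yy * (1 + xx)⁻¹ := by simpa [zmon, pairing] using h4 (0, 1)
  have k5x : K5 xx = xx * (1 + yy⁻¹)⁻¹ := by simpa [zmon, pairing] using h5 (1, 0)
  have k5y : K5 yy = yy := by simpa [zmon, pairing] using h5 (0, 1)
  -- the x-chain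
  have e2 : K2 (K1 xx) = xx + xx * yy := by rw [k1x, k2x]; ring
  have e3 : K3 (K2 (K1 xx)) = xx + xx * xx * yy + xx * yy := by
    rw [e2, map_add, map_mul, k3x, k3y]
    field_simp
  have e4 : K4 (K3 (K2 (K1 xx))) = xx + xx * yy := by
    rw [e3, map_add, map_add, map_mul, map_mul, map_mul, k4x, k4y]
    field_simp
    ring
  have e5 : K5 (K4 (K3 (K2 (K1 xx)))) = xx * yy := by
    rw [e4, map_add, map_mul, k5x, k5y, one_add_yy_inv, mul_inv, inv_inv]
    field_simp
  -- the y-chain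
  have f2 : K2 (K1 yy) = yy + yy * xx⁻¹ * (1 + yy)⁻¹ := by
    rw [k1y, map_mul, map_add, map_one, map_inv₀, k2y, k2x]
    field_simp
  have g3 : K3 ((1:K) + yy) = (1 + xx * yy + yy) * (1 + xx * yy)⁻¹ := by
    rw [map_add, map_one, k3y]
    field_simp
    rw [one_add_div (by rw [mul_comm]; exact H1xy)]
  have f3 : K3 (K2 (K1 yy)) = yy * xx⁻¹ * (1 + xx) * (1 + xx * yy + yy)⁻¹ := by
    rw [f2, map_add, map_mul, map_mul, map_inv₀, map_inv₀, g3, k3y, k3x]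
    field_simp
    have H1' : (1:K) + yy * xx ≠ 0 := by rw [mul_comm]; exact H1xy
    have Hq' : (1:K) + yy * xx + yy ≠ 0 := by rw [mul_comm yy]; exact Hq
    field_simp
    ring
  have g4 : K4 ((1:K) + xx * yy + yy) = 1 + yy := by
    rw [map_add, map_add, map_one, map_mul, k4x, k4y]
    field_simp
    ring
  have f4 : K4 (K3 (K2 (K1 yy))) = yy * xx⁻¹ * (1 + yy)⁻¹ := by
    rw [f3, map_mul, map_inv₀, g4, map_mul, map_mul, map_inv₀, map_add, map_one, k4x, k4y]
    field_simp
  have f5 : K5 (K4 (K3 (K2 (K1 yy)))) = xx⁻¹ := by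
    rw [f4, map_mul, map_mul, map_inv₀, map_inv₀, map_add, map_one, k5y, k5x,
      one_add_yy_inv]
    field_simp
  -- general monomial
  intro μ
  have : K5 (K4 (K3 (K2 (K1 (zmon μ)))))
      = (K5 (K4 (K3 (K2 (K1 xx)))))^μ.1 * (K5 (K4 (K3 (K2 (K1 yy)))))^μ.2 := by
    rw [zmon, map_mul, map_mul, map_mul, map_mul, map_mul,
      map_zpow₀, map_zpow₀, map_zpow₀, map_zpow₀, map_zpow₀,
      map_zpow₀, map_zpow₀, map_zpow₀, map_zpow₀, map_zpow₀]
  rw [this, e5, f5, zmon]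
  rw [mul_zpow, inv_zpow, ← zpow_neg, zpow_sub₀ xx_ne]
  rw [div_eq_mul_inv, ← zpow_neg]
  ring

end
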